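/- Under the assumptions of Theorem 2 (non-increasing costs $c_1 \ge \dots \ge c_{n+1}$, fixed sequence), if $A^*$ is any feasible appointment vector and $i' \ge 2$ is an index with $A^*_{i'}$ strictly greater than its waiting-time lower bound $\left(\max_{l < i'}(A^*_l + U_l) - \sum_j \pi_{i'j}W_j\right)^+$, then replacing $A^*_{i'}$ by this lower bound yields another feasible solution whose worst-case total cost is no larger. Iterating, the componentwise-minimal feasible appointment vector (the ASAP schedule) is optimal. -/

import Mathlib

/-- Completion times from appointment times `A` and service durations `sv`. -/
noncomputable def ctimes14 (A sv : ℕ → ℝ) : ℕ → ℝ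
  | 0 => 0
  | i + 1 => max (A (i + 1)) (ctimes14 A sv i) + sv (i + 1)

/-- No-show scenarios with exactly `k` show-ups among customers `1,…,n`. -/
def isLam14 (n k : ℕ) (lam : ℕ → ℝ) : Prop :=
  (∀ j, lam j = 0 ∨ lam j = 1) ∧ ∑ j ∈ Finset.Icc 1 n, lam j = (k : ℝ)

/-- `U l i`: the worst-case total realized service time of appointments
`l (inclusive) … i (exclusive)`, over no-show scenarios with `k - 1` show-ups. -/
noncomputable def U14 (n k : ℕ) (asg : ℕ → ℕ) (hi : ℕ → ℝ) (l i : ℕ) : ℝ :=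
  sSup {x | ∃ lam : ℕ → ℝ, isLam14 n (k - 1) lam ∧
    x = ∑ σ ∈ Finset.Ico l i, lam (asg σ) * hi (asg σ)}

/-- Feasibility: `A 1 = 0` and each appointment time dominates its waiting-time
lower bound `(max_{l<i}(A l + U l i) - W_{asg i})⁺`. -/
def feas14 (n k : ℕ) (asg : ℕ → ℕ) (hi W : ℕ → ℝ) (A : ℕ → ℝ) : Prop :=
  A 1 = 0 ∧
    ∀ i, ∀ _h2 : 2 ≤ i, i ≤ n →
      max (((Finset.Icc 1 (i - 1)).sup' (Finset.nonempty_Icc.mpr (by omega))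
        (fun l => A l + U14 n k asg hi l i)) - W (asg i)) 0 ≤ A i

/-- Total cost of schedule `A` under service times `p` and no-show scenario `lam`. -/
noncomputable def cost14 (n : ℕ) (asg : ℕ → ℕ) (c : ℕ → ℝ) (co L : ℝ)
    (A p lam : ℕ → ℝ) : ℝ :=
  (∑ i ∈ Finset.Icc 1 n,
      c i * max (A i - ctimes14 A (fun σ => lam (asg σ) * p (asg σ)) (i - 1)) 0) +
    max (c (n + 1) * (L - ctimes14 A (fun σ => lam (asg σ) * p (asg σ)) n))
      (co * (ctimes14 A (fun σ => lam (asg σ) * p (asg σ)) n - L))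

/-- Worst-case total cost over service-time box and no-show scenarios with `k`
show-ups. -/
noncomputable def wcost14 (n k : ℕ) (asg : ℕ → ℕ) (c : ℕ → ℝ) (co L : ℝ)
    (lo hi A : ℕ → ℝ) : ℝ :=
  sSup {x | ∃ p lam : ℕ → ℝ, (∀ j, p j ∈ Set.Icc (lo j) (hi j)) ∧
    isLam14 n k lam ∧ x = cost14 n asg c co L A p lam}


/-- auxiliary lemmas -/
private lemma max_sub_eq14 (a b : ℝ) : max (a - b) 0 = max a b - b := by
  rcases le_total a b with h | h
  · rw [max_eq_right (sub_nonpos.mpr h), max_eq_right h]; ring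
  · rw [max_eq_left (sub_nonneg.mpr h), max_eq_left h]

lemma ctimes14_zero (A sv : ℕ → ℝ) : ctimes14 A sv 0 = 0 := rfl

lemma ctimes14_succ (A sv : ℕ → ℝ) (m : ℕ) :
    ctimes14 A sv (m + 1) = max (A (m + 1)) (ctimes14 A sv m) + sv (m + 1) := rfl

lemma ctimes14_mono (A B sv : ℕ → ℝ) (n : ℕ)
    (hAB : ∀ σ, 1 ≤ σ → σ ≤ n → A σ ≤ B σ) :
    ∀ m, m ≤ n → ctimes14 A sv m ≤ ctimes14 B sv m := by
  intro m
  induction m with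
  | zero => intro _; exact le_rfl
  | succ m ih =>
      intro hm
      rw [ctimes14_succ, ctimes14_succ]
      exact add_le_add (max_le_max (hAB (m + 1) (by omega) hm) (ih (by omega))) le_rfl

lemma idle14_eq (X s : ℕ → ℝ) (i : ℕ) (hi : 1 ≤ i) :
    max (X i - ctimes14 X s (i - 1)) 0
      = ctimes14 X s i - ctimes14 X s (i - 1) - s i := by
  obtain ⟨j, rfl⟩ : ∃ j, i = j + 1 := ⟨i - 1, by omega⟩
  simp only [Nat.add_sub_cancel]
  rw [max_sub_eq14, ctimes14_succ]
  ring

lemma key14 (n : ℕ) (c : ℕ → ℝ) (hc : ∀ i, 0 ≤ c i)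
    (hcdec : ∀ i j, i ≤ j → c j ≤ c i) (s A B : ℕ → ℝ)
    (hAB : ∀ σ, 1 ≤ σ → σ ≤ n → A σ ≤ B σ) :
    ∀ m, m ≤ n →
      c (m + 1) * (ctimes14 B s m - ctimes14 A s m) ≤
        ∑ i ∈ Finset.Icc 1 m,
          (c i * max (B i - ctimes14 B s (i - 1)) 0
            - c i * max (A i - ctimes14 A s (i - 1)) 0) := by
  intro m
  induction m with
  | zero =>
      intro _
      rw [ctimes14_zero, ctimes14_zero,
        show Finset.Icc 1 0 = ∅ from Finset.Icc_eq_empty (by omega)]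
      simp
  | succ m ih =>
      intro hm
      rw [Finset.sum_Icc_succ_top (by omega : 1 ≤ m + 1)]
      rw [idle14_eq A s (m + 1) (by omega), idle14_eq B s (m + 1) (by omega)]
      have h1 := ih (by omega)
      have h2 : c (m + 1 + 1) ≤ c (m + 1) := hcdec _ _ (by omega)
      have h3 : ctimes14 A s (m + 1) ≤ ctimes14 B s (m + 1) :=
        ctimes14_mono A B s n hAB (m + 1) hm
      have h4 := mul_le_mul_of_nonneg_right h2 (sub_nonneg.mpr h3)
      simp only [Nat.add_sub_cancel]
      nlinarith [h1, h4]

lemma cost14_mono (n : ℕ) (asg : ℕ → ℕ) (c : ℕ → ℝ) (co L : ℝ)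
    (hc : ∀ i, 0 ≤ c i) (hcdec : ∀ i j, i ≤ j → c j ≤ c i) (hco : 0 ≤ co)
    (A B p lam : ℕ → ℝ) (hAB : ∀ σ, 1 ≤ σ → σ ≤ n → A σ ≤ B σ) :
    cost14 n asg c co L A p lam ≤ cost14 n asg c co L B p lam := by
  simp only [cost14]
  set s : ℕ → ℝ := fun σ => lam (asg σ) * p (asg σ) with hs
  have K := key14 n c hc hcdec s A B hAB n le_rfl
  rw [Finset.sum_sub_distrib] at K
  have h3 : ctimes14 A s n ≤ ctimes14 B s n := ctimes14_mono A B s n hAB n le_rfl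
  have hterm : max (c (n + 1) * (L - ctimes14 A s n)) (co * (ctimes14 A s n - L)) ≤
      max (c (n + 1) * (L - ctimes14 B s n)) (co * (ctimes14 B s n - L))
        + c (n + 1) * (ctimes14 B s n - ctimes14 A s n) := by
    apply max_le
    · have h5 := le_max_left (c (n + 1) * (L - ctimes14 B s n))
        (co * (ctimes14 B s n - L))
      nlinarith
    · have h5 : co * (ctimes14 A s n - L) ≤ co * (ctimes14 B s n - L) :=
        mul_le_mul_of_nonneg_left (by linarith) hco
      have h6 := le_max_right (c (n + 1) * (L - ctimes14 B s n))
        (co * (ctimes14 B s n - L))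
      nlinarith [mul_nonneg (hc (n + 1)) (sub_nonneg.mpr h3)]
  linarith [K, hterm]

lemma cost14_bdd (n k : ℕ) (asg : ℕ → ℕ) (c : ℕ → ℝ) (co L : ℝ) (lo hi : ℕ → ℝ)
    (hlo : ∀ j, 0 ≤ lo j) (hlohi : ∀ j, lo j ≤ hi j)
    (hc : ∀ i, 0 ≤ c i) (hco : 0 ≤ co) (A : ℕ → ℝ) :
    BddAbove {x | ∃ p lam : ℕ → ℝ, (∀ j, p j ∈ Set.Icc (lo j) (hi j)) ∧
      isLam14 n k lam ∧ x = cost14 n asg c co L A p lam} := by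
  refine ⟨(∑ i ∈ Finset.Icc 1 n, c i * max (A i) 0)
    + max (c (n + 1) * |L|)
        (co * ((∑ i ∈ Finset.Icc 1 n, (max (A i) 0 + hi (asg i))) + |L|)), ?_⟩
  rintro x ⟨p, lam, hp, hlam, rfl⟩
  simp only [cost14]
  set s : ℕ → ℝ := fun σ => lam (asg σ) * p (asg σ) with hs
  have hsb : ∀ σ, 0 ≤ s σ ∧ s σ ≤ hi (asg σ) := by
    intro σ
    have hsσ : s σ = lam (asg σ) * p (asg σ) := rfl
    rw [hsσ]
    rcases hlam.1 (asg σ) with h | h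
    · rw [h, zero_mul]
      exact ⟨le_rfl, le_trans (hlo _) (hlohi _)⟩
    · rw [h, one_mul]
      exact ⟨le_trans (hlo _) (hp _).1, (hp _).2⟩
  have hC : ∀ m, 0 ≤ ctimes14 A s m ∧
      ctimes14 A s m ≤ ∑ i ∈ Finset.Icc 1 m, (max (A i) 0 + hi (asg i)) := by
    intro m
    induction m with
    | zero =>
        rw [ctimes14_zero, show Finset.Icc 1 0 = ∅ from Finset.Icc_eq_empty (by omega)]
        simp
    | succ m ih =>
        rw [ctimes14_succ, Finset.sum_Icc_succ_top (by omega : 1 ≤ m + 1)]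
        constructor
        · have h1 := (hsb (m + 1)).1
          have h2 := ih.1
          have h3 := le_max_right (A (m + 1)) (ctimes14 A s m)
          linarith
        · have h1 : max (A (m + 1)) (ctimes14 A s m) ≤ max (A (m + 1)) 0 + ctimes14 A s m := by
            apply max_le
            · have := ih.1; have := le_max_left (A (m + 1)) (0 : ℝ); linarith
            · have := le_max_right (A (m + 1)) (0 : ℝ); linarith
          have h2 := (hsb (m + 1)).2
          have h3 := ih.2
          linarith
  apply add_le_add
  · apply Finset.sum_le_sum
    intro i hi'
    apply mul_le_mul_of_nonneg_left _ (hc i)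
    apply max_le_max _ le_rfl
    have := (hC (i - 1)).1
    linarith
  · apply max_le_max
    · apply mul_le_mul_of_nonneg_left _ (hc (n + 1))
      have := (hC n).1
      have := le_abs_self L
      linarith
    · apply mul_le_mul_of_nonneg_left _ hco
      have := (hC n).2
      have := neg_abs_le L
      linarith

lemma wcost14_set_nonempty (n k : ℕ) (hk2 : k ≤ n) (asg : ℕ → ℕ) (c : ℕ → ℝ)
    (co L : ℝ) (lo hi : ℕ → ℝ) (hlohi : ∀ j, lo j ≤ hi j) (A : ℕ → ℝ) :
    Set.Nonempty {x | ∃ p lam : ℕ → ℝ, (∀ j, p j ∈ Set.Icc (lo j) (hi j)) ∧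
      isLam14 n k lam ∧ x = cost14 n asg c co L A p lam} := by
  classical
  refine ⟨_, lo, fun j => if j ∈ Finset.Icc 1 k then (1 : ℝ) else 0,
    fun j => Set.mem_Icc.mpr ⟨le_rfl, hlohi j⟩,
    ⟨fun j => by by_cases h : j ∈ Finset.Icc 1 k <;> simp [h], ?_⟩, rfl⟩
  rw [Finset.sum_ite_mem]
  rw [Finset.inter_eq_right.mpr (Finset.Icc_subset_Icc le_rfl hk2)]
  simp [Nat.card_Icc]

lemma wcost14_mono (n k : ℕ) (hk2 : k ≤ n) (asg : ℕ → ℕ) (c : ℕ → ℝ) (co L : ℝ)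
    (lo hi : ℕ → ℝ) (hlo : ∀ j, 0 ≤ lo j) (hlohi : ∀ j, lo j ≤ hi j)
    (hc : ∀ i, 0 ≤ c i) (hcdec : ∀ i j, i ≤ j → c j ≤ c i) (hco : 0 ≤ co)
    (A B : ℕ → ℝ) (hAB : ∀ σ, 1 ≤ σ → σ ≤ n → A σ ≤ B σ) :
    wcost14 n k asg c co L lo hi A ≤ wcost14 n k asg c co L lo hi B := by
  simp only [wcost14]
  apply csSup_le (wcost14_set_nonempty n k hk2 asg c co L lo hi hlohi A)
  rintro x ⟨p, lam, hp, hlam, rfl⟩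
  calc cost14 n asg c co L A p lam ≤ cost14 n asg c co L B p lam :=
        cost14_mono n asg c co L hc hcdec hco A B p lam hAB
    _ ≤ _ := le_csSup (cost14_bdd n k asg c co L lo hi hlo hlohi hc hco B)
        ⟨p, lam, hp, hlam, rfl⟩

/-- with non-increasing idle costs, lowering any appointment time
that strictly exceeds its waiting-time lower bound down to that bound preserves
feasibility and does not increase the worst-case total cost; iterating, the
componentwise-minimal feasible appointment vector (the ASAP schedule) is optimal. -/
theorem lowering_to_bound_preserves_feasibility_and_cost
    (n k : ℕ) (hn : 1 ≤ n) (hk1 : 1 ≤ k) (hk2 : k ≤ n)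
    (asg : ℕ → ℕ) (lo hi W : ℕ → ℝ) (c : ℕ → ℝ) (co L : ℝ)
    (hlo : ∀ j, 0 ≤ lo j) (hlohi : ∀ j, lo j ≤ hi j) (hW : ∀ j, 0 ≤ W j)
    (hc : ∀ i, 0 ≤ c i) (hcdec : ∀ i j, i ≤ j → c j ≤ c i) (hco : 0 ≤ co) :
    (∀ (Astar : ℕ → ℝ), feas14 n k asg hi W Astar →
      ∀ i', ∀ h2 : 2 ≤ i', i' ≤ n →
        max (((Finset.Icc 1 (i' - 1)).sup' (Finset.nonempty_Icc.mpr (by omega))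
          (fun l => Astar l + U14 n k asg hi l i')) - W (asg i')) 0 < Astar i' →
        feas14 n k asg hi W (Function.update Astar i'
          (max (((Finset.Icc 1 (i' - 1)).sup' (Finset.nonempty_Icc.mpr (by omega))
            (fun l => Astar l + U14 n k asg hi l i')) - W (asg i')) 0)) ∧
        wcost14 n k asg c co L lo hi (Function.update Astar i'
          (max (((Finset.Icc 1 (i' - 1)).sup' (Finset.nonempty_Icc.mpr (by omega))
            (fun l => Astar l + U14 n k asg hi l i')) - W (asg i')) 0)) ≤
          wcost14 n k asg c co L lo hi Astar) ∧
    ∀ AA : ℕ → ℝ, AA 1 = 0 →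
      (∀ i, ∀ _h2 : 2 ≤ i, i ≤ n →
        AA i = max (((Finset.Icc 1 (i - 1)).sup' (Finset.nonempty_Icc.mpr (by omega))
          (fun l => AA l + U14 n k asg hi l i)) - W (asg i)) 0) →
      feas14 n k asg hi W AA ∧
        ∀ B : ℕ → ℝ, feas14 n k asg hi W B →
          wcost14 n k asg c co L lo hi AA ≤ wcost14 n k asg c co L lo hi B := by
  constructor
  · intro Astar hfeas i' h2 hn' hlt
    set v := max (((Finset.Icc 1 (i' - 1)).sup' (Finset.nonempty_Icc.mpr (by omega))
      (fun l => Astar l + U14 n k asg hi l i')) - W (asg i')) 0 with hv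
    have hA'le : ∀ σ, Function.update Astar i' v σ ≤ Astar σ := by
      intro σ
      by_cases h : σ = i'
      · subst h; rw [Function.update_self]; exact le_of_lt hlt
      · rw [Function.update_of_ne h]
    have hA'lt : ∀ σ, σ ≠ i' → Function.update Astar i' v σ = Astar σ :=
      fun σ h => Function.update_of_ne h _ _
    constructor
    · constructor
      · rw [Function.update_of_ne (by omega : (1 : ℕ) ≠ i')]; exact hfeas.1
      · intro i hi2 hin
        by_cases hii : i = i'
        · subst hii
          have hne : ∀ l ∈ Finset.Icc 1 (i - 1),
              Function.update Astar i v l + U14 n k asg hi l i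
                = Astar l + U14 n k asg hi l i := by
            intro l hl
            have hl' := Finset.mem_Icc.mp hl
            rw [hA'lt l (by omega)]
          have hsup : (Finset.Icc 1 (i - 1)).sup' (Finset.nonempty_Icc.mpr (by omega))
              (fun l => Function.update Astar i v l + U14 n k asg hi l i)
              = (Finset.Icc 1 (i - 1)).sup' (Finset.nonempty_Icc.mpr (by omega))
              (fun l => Astar l + U14 n k asg hi l i) :=
            Finset.sup'_congr _ rfl hne
          rw [hsup, Function.update_self]
        · rw [hA'lt i hii]
          refine le_trans ?_ (hfeas.2 i hi2 hin)
          apply max_le_max _ le_rfl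
          apply sub_le_sub_right
          apply Finset.sup'_le
          intro l hl
          exact le_trans (add_le_add (hA'le l) le_rfl)
            (Finset.le_sup' (fun l => Astar l + U14 n k asg hi l i) hl)
    · exact wcost14_mono n k hk2 asg c co L lo hi hlo hlohi hc hcdec hco _ _
        (fun σ _ _ => hA'le σ)
  · intro AA h1 heq
    have hfeasAA : feas14 n k asg hi W AA :=
      ⟨h1, fun i hi2 hin => le_of_eq (heq i hi2 hin).symm⟩
    refine ⟨hfeasAA, fun B hB => ?_⟩
    have hle : ∀ i, 1 ≤ i → i ≤ n → AA i ≤ B i := by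
      intro i
      induction i using Nat.strong_induction_on with
      | _ i ih =>
        intro h1i hin
        by_cases hi1 : i = 1
        · subst hi1; rw [h1, hB.1]
        · have hi2 : 2 ≤ i := by omega
          rw [heq i hi2 hin]
          refine le_trans ?_ (hB.2 i hi2 hin)
          apply max_le_max _ le_rfl
          apply sub_le_sub_right
          apply Finset.sup'_le
          intro l hl
          have hl' := Finset.mem_Icc.mp hl
          exact le_trans
            (add_le_add (ih l (by omega) (by omega) (by omega)) le_rfl)
            (Finset.le_sup' (fun l => B l + U14 n k asg hi l i) hl)
    exact wcost14_mono n k hk2 asg c co L lo hi hlo hlohi hc hcdec hco AA B hle
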